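/- arXiv:2208.09604 — 2 statements merged into one kernel-verified Lean document; each statement's English description precedes it below -/
import Mathlib

section
/- Let α, β, γ, δ ∈ (0, 2π). Then (e^{iα} - 1)(e^{iδ} - 1) = (e^{iβ} - 1)(e^{iγ} - 1) holds if and only if (α, δ) = (β, γ) or (α, δ) = (γ, β). -/
set_option maxHeartbeats 1000000

open Real

theorem key (θ : ℝ) : Complex.exp (θ * Complex.I) - 1 =
    (2 * Real.sin (θ/2)) * Complex.I * Complex.exp (((θ/2 : ℝ)) * Complex.I) := by
  have e1 : (θ:ℂ) * Complex.I = ((θ/2:ℝ) * Complex.I) + ((θ/2:ℝ)*Complex.I) := by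
    push_cast; ring
  rw [e1, Complex.exp_add, Complex.exp_mul_I]
  rw [show ((Real.sin (θ/2) : ℂ)) = Complex.sin (θ/2:ℝ) from (Complex.ofReal_sin _)]
  have h1 := Complex.sin_sq_add_cos_sq ((θ/2:ℝ):ℂ)
  have hI : (Complex.I)^2 = -1 := Complex.I_sq
  linear_combination h1 - Complex.sin ((θ/2:ℝ):ℂ)^2 * hI

theorem coshalf (a b : ℝ) :
    Real.cos ((a-b)/2) - Real.cos ((a+b)/2) = 2 * Real.sin (a/2) * Real.sin (b/2) := by
  have h := Real.cos_sub_cos ((a-b)/2) ((a+b)/2)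
  rw [show ((a-b)/2+(a+b)/2)/2 = a/2 by ring, show ((a-b)/2-(a+b)/2)/2 = -(b/2) by ring,
    Real.sin_neg] at h
  linarith

theorem stmt_0 (α β γ δ : ℝ)
    (hα : α ∈ Set.Ioo 0 (2 * π)) (hβ : β ∈ Set.Ioo 0 (2 * π))
    (hγ : γ ∈ Set.Ioo 0 (2 * π)) (hδ : δ ∈ Set.Ioo 0 (2 * π)) :
    (Complex.exp (α * Complex.I) - 1) * (Complex.exp (δ * Complex.I) - 1) =
      (Complex.exp (β * Complex.I) - 1) * (Complex.exp (γ * Complex.I) - 1) ↔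
    (α = β ∧ δ = γ) ∨ (α = γ ∧ δ = β) := by
  obtain ⟨hα1, hα2⟩ := hα
  obtain ⟨hβ1, hβ2⟩ := hβ
  obtain ⟨hγ1, hγ2⟩ := hγ
  obtain ⟨hδ1, hδ2⟩ := hδ
  have pi_pos := Real.pi_pos
  have sα : 0 < Real.sin (α/2) := Real.sin_pos_of_pos_of_lt_pi (by linarith) (by linarith)
  have sβ : 0 < Real.sin (β/2) := Real.sin_pos_of_pos_of_lt_pi (by linarith) (by linarith)
  have sγ : 0 < Real.sin (γ/2) := Real.sin_pos_of_pos_of_lt_pi (by linarith) (by linarith)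
  have sδ : 0 < Real.sin (δ/2) := Real.sin_pos_of_pos_of_lt_pi (by linarith) (by linarith)
  constructor
  · intro h
    rw [key α, key δ, key β, key γ] at h
    have hI : (Complex.I)^2 = -1 := Complex.I_sq
    have eab : Complex.exp (((α/2+δ/2:ℝ)) * Complex.I)
        = Complex.exp ((α/2:ℝ)*Complex.I) * Complex.exp ((δ/2:ℝ)*Complex.I) := by
      rw [← Complex.exp_add]; push_cast; ring_nf
    have ecd : Complex.exp (((β/2+γ/2:ℝ)) * Complex.I)
        = Complex.exp ((β/2:ℝ)*Complex.I) * Complex.exp ((γ/2:ℝ)*Complex.I) := by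
      rw [← Complex.exp_add]; push_cast; ring_nf
    have hh : ((4 * Real.sin (α/2) * Real.sin (δ/2) : ℝ) : ℂ) *
          Complex.exp (((α/2+δ/2:ℝ)) * Complex.I)
        = ((4 * Real.sin (β/2) * Real.sin (γ/2) : ℝ) : ℂ) *
          Complex.exp (((β/2+γ/2:ℝ)) * Complex.I) := by
      rw [eab, ecd]
      simp only [Complex.ofReal_mul, Complex.ofReal_ofNat]
      linear_combination -h + (4*(Real.sin (α/2):ℂ)*(Real.sin (δ/2):ℂ)*
        (Complex.exp ((α/2:ℝ)*Complex.I) * Complex.exp ((δ/2:ℝ)*Complex.I))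
        - 4*(Real.sin (β/2):ℂ)*(Real.sin (γ/2):ℂ)*
        (Complex.exp ((β/2:ℝ)*Complex.I) * Complex.exp ((γ/2:ℝ)*Complex.I))) * hI
    have habs := congrArg (norm : ℂ → ℝ) hh
    rw [norm_mul, norm_mul, Complex.norm_exp_ofReal_mul_I, Complex.norm_exp_ofReal_mul_I,
      Complex.norm_real, Complex.norm_real, Real.norm_eq_abs, Real.norm_eq_abs, mul_one, mul_one] at habs
    rw [abs_of_pos (by positivity), abs_of_pos (by positivity)] at habs
    have hprod : Real.sin (α/2) * Real.sin (δ/2) = Real.sin (β/2) * Real.sin (γ/2) := by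
      linarith
    have hAB : (4 * Real.sin (α/2) * Real.sin (δ/2) : ℝ)
        = 4 * Real.sin (β/2) * Real.sin (γ/2) := by linarith
    rw [hAB] at hh
    have hexp := mul_left_cancel₀ (by
      simp only [ne_eq, Complex.ofReal_eq_zero]; positivity) hh
    rw [Complex.exp_eq_exp_iff_exists_int] at hexp
    obtain ⟨n, hn⟩ := hexp
    have him := congrArg Complex.im hn
    simp [Complex.add_im, Complex.mul_im, Complex.ofReal_re, Complex.ofReal_im] at him
    have hn0 : n = 0 := by
      have h1 : (-1 : ℝ) < n := by nlinarith
      have h2 : (n : ℝ) < 1 := by nlinarith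
      exact_mod_cast (by omega : ∀ m : ℤ, (-1 < m) → (m < 1) → m = 0) n
        (by exact_mod_cast h1) (by exact_mod_cast h2)
    rw [hn0] at him
    have hsum : α + δ = β + γ := by push_cast at him; linarith
    clear h hh hn him eab ecd hI habs hAB
    have hcosa := coshalf α δ
    have hcosb := coshalf β γ
    rw [show (α+δ)/2 = (β+γ)/2 by linarith] at hcosa
    have hcos : Real.cos ((α-δ)/2) = Real.cos ((β-γ)/2) := by
      nlinarith [hprod, hcosa, hcosb]
    have hm1 : |(α-δ)/2| ≤ π := by
      rw [abs_div, abs_two, div_le_iff₀ (by norm_num : (0:ℝ) < 2)]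
      rcases abs_cases (α - δ) with ⟨he, _⟩ | ⟨he, _⟩ <;> linarith
    have hm2 : |(β-γ)/2| ≤ π := by
      rw [abs_div, abs_two, div_le_iff₀ (by norm_num : (0:ℝ) < 2)]
      rcases abs_cases (β - γ) with ⟨he, _⟩ | ⟨he, _⟩ <;> linarith
    have habd : |(α-δ)/2| = |(β-γ)/2| :=
      Real.injOn_cos ⟨abs_nonneg _, hm1⟩ ⟨abs_nonneg _, hm2⟩
        (by rw [Real.cos_abs, Real.cos_abs, hcos])
    rw [abs_div, abs_div, abs_two] at habd
    have habd2 : |α - δ| = |β - γ| := by linarith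
    rcases abs_eq_abs.mp habd2 with he | he
    · left; constructor <;> linarith
    · right; constructor <;> linarith
  · rintro (⟨rfl, rfl⟩ | ⟨rfl, rfl⟩)
    · ring
    · ring
end

section
/- Let α, β, γ, δ ∈ (0, π/2). If cos α · cos δ = cos β · cos γ and sin α · sin δ = sin β · sin γ, then either (α = β and γ = δ) or (α = γ and β = δ). -/
open Real

theorem stmt_1 (α β γ δ : ℝ)
    (hα : α ∈ Set.Ioo 0 (π / 2)) (hβ : β ∈ Set.Ioo 0 (π / 2))
    (hγ : γ ∈ Set.Ioo 0 (π / 2)) (hδ : δ ∈ Set.Ioo 0 (π / 2))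
    (h1 : Real.cos α * Real.cos δ = Real.cos β * Real.cos γ)
    (h2 : Real.sin α * Real.sin δ = Real.sin β * Real.sin γ) :
    (α = β ∧ γ = δ) ∨ (α = γ ∧ β = δ) := by
  obtain ⟨ha1, ha2⟩ := hα
  obtain ⟨hb1, hb2⟩ := hβ
  obtain ⟨hc1, hc2⟩ := hγ
  obtain ⟨hd1, hd2⟩ := hδ
  have hpi := Real.pi_pos
  have hsum : Real.cos (α + δ) = Real.cos (β + γ) := by
    rw [Real.cos_add, Real.cos_add, h1, h2]
  have hdiff : Real.cos (α - δ) = Real.cos (β - γ) := by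
    rw [Real.cos_sub, Real.cos_sub, h1, h2]
  have heq1 : α + δ = β + γ := by
    apply Real.injOn_cos ⟨by linarith, by linarith⟩ ⟨by linarith, by linarith⟩ hsum
  have hdiff' : Real.cos |α - δ| = Real.cos |β - γ| := by
    rw [Real.cos_abs, Real.cos_abs]; exact hdiff
  have heq2 : |α - δ| = |β - γ| := by
    apply Real.injOn_cos ⟨abs_nonneg _, ?_⟩ ⟨abs_nonneg _, ?_⟩ hdiff'
    · rw [abs_le]; constructor <;> linarith
    · rw [abs_le]; constructor <;> linarith
  rcases abs_eq_abs.mp heq2 with h | h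
  · left; constructor <;> linarith
  · right; constructor <;> linarith
end
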